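/- An n-Hausdorff space X is n-H-closed if and only if for all open filters F₁,…,F_{n−1} on X such that F₁ ∪ ⋯ ∪ F_{n−1} has the finite intersection property, the join filter F₁ ∨ ⋯ ∨ F_{n−1} satisfies |a(F₁ ∨ ⋯ ∨ F_{n−1})| ≥ n−1. -/

import Mathlib

open Set Topology Function

universe u v

/-- A space is `n`-Hausdorff if any `n` distinct points admit open neighborhoods
with empty intersection. -/
def NHausdorff (X : Type u) [TopologicalSpace X] (n : ℕ) : Prop :=
  ∀ x : Fin n → X, Function.Injective x →
    ∃ U : Fin n → Set X, (∀ i, IsOpen (U i) ∧ x i ∈ U i) ∧ (⋂ i, U i) = (∅ : Set X)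

/-- An open filter on `X`: a nonempty family of nonempty open sets closed under
finite intersections and open supersets. -/
structure IsOpenFilter {X : Type u} [TopologicalSpace X] (F : Set (Set X)) : Prop where
  nonempty : F.Nonempty
  isOpen_mem : ∀ U ∈ F, IsOpen U
  nonempty_mem : ∀ U ∈ F, U.Nonempty
  inter_mem : ∀ U ∈ F, ∀ V ∈ F, U ∩ V ∈ F
  superset_mem : ∀ U ∈ F, ∀ V : Set X, IsOpen V → U ⊆ V → V ∈ F

/-- An open ultrafilter: a maximal open filter. -/
def IsOpenUltrafilter {X : Type u} [TopologicalSpace X] (F : Set (Set X)) : Prop :=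
  IsOpenFilter F ∧ ∀ G : Set (Set X), IsOpenFilter G → F ⊆ G → G = F

/-- The adherence of a family of sets: `⋂ {cl U : U ∈ F}`. -/
def adh {X : Type u} [TopologicalSpace X] (F : Set (Set X)) : Set X :=
  ⋂ U ∈ F, closure U

/-- `X` is `n`-H-closed: `X` is `n`-Hausdorff and closed in every `n`-Hausdorff space
in which it embeds. -/
def NHClosed (X : Type u) [TopologicalSpace X] (n : ℕ) : Prop :=
  NHausdorff X n ∧
    ∀ (Z : Type u) (_ : TopologicalSpace Z) (e : X → Z),
      NHausdorff Z n → IsEmbedding e → IsClosed (Set.range e)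

/-- The open filter generated by a family `S` of open sets: all open sets containing
a finite intersection of members of `S`. -/
def openFilterJoin {X : Type u} [TopologicalSpace X] (S : Set (Set X)) : Set (Set X) :=
  {U | IsOpen U ∧ ∃ t : Finset (Set X), ↑t ⊆ S ∧ ⋂₀ (t : Set (Set X)) ⊆ U}

section Aux

variable {X : Type u} [TopologicalSpace X]

lemma IsOpenFilter.univ_mem {F : Set (Set X)} (hF : IsOpenFilter F) : univ ∈ F := by
  obtain ⟨U, hU⟩ := hF.nonempty
  exact hF.superset_mem U hU univ isOpen_univ (subset_univ U)

lemma IsOpenFilter.sInter_finset_mem {F : Set (Set X)} (hF : IsOpenFilter F)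
    (t : Finset (Set X)) (ht : ↑t ⊆ F) : ⋂₀ (t : Set (Set X)) ∈ F := by
  classical
  induction t using Finset.induction_on with
  | empty => simpa using hF.univ_mem
  | @insert U s hUs ih =>
      rw [Finset.coe_insert] at ht ⊢
      rw [sInter_insert]
      exact hF.inter_mem _ (ht (mem_insert _ _)) _ (ih fun V hV => ht (Or.inr hV))

lemma exists_openUltrafilter {F : Set (Set X)} (hF : IsOpenFilter F) :
    ∃ U, IsOpenUltrafilter U ∧ F ⊆ U := by
  have hZ : ∀ c ⊆ {G : Set (Set X) | IsOpenFilter G}, IsChain (· ⊆ ·) c → c.Nonempty →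
      ∃ ub ∈ {G : Set (Set X) | IsOpenFilter G}, ∀ s ∈ c, s ⊆ ub := by
    intro c hcS hchain ⟨G₀, hG₀⟩
    refine ⟨⋃₀ c, ⟨?_, ?_, ?_, ?_, ?_⟩, fun s hs => subset_sUnion_of_mem hs⟩
    · obtain ⟨U, hU⟩ := (hcS hG₀).nonempty
      exact ⟨U, G₀, hG₀, hU⟩
    · rintro U ⟨G, hGc, hUG⟩; exact (hcS hGc).isOpen_mem U hUG
    · rintro U ⟨G, hGc, hUG⟩; exact (hcS hGc).nonempty_mem U hUG
    · rintro U ⟨G, hGc, hUG⟩ V ⟨G', hG'c, hVG'⟩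
      rcases hchain.total hGc hG'c with h | h
      · exact ⟨G', hG'c, (hcS hG'c).inter_mem U (h hUG) V hVG'⟩
      · exact ⟨G, hGc, (hcS hGc).inter_mem U hUG V (h hVG')⟩
    · rintro U ⟨G, hGc, hUG⟩ V hV hUV
      exact ⟨G, hGc, (hcS hGc).superset_mem U hUG V hV hUV⟩
  obtain ⟨m, hFm, hmem, hmax⟩ := zorn_subset_nonempty {G | IsOpenFilter G} hZ F hF
  exact ⟨m, ⟨hmem, fun G hG hmG => subset_antisymm (hmax hG hmG) hmG⟩, hFm⟩

lemma IsOpenUltrafilter.mem_of_inter_nonempty {F : Set (Set X)} (hF : IsOpenUltrafilter F)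
    {V : Set X} (hV : IsOpen V) (h : ∀ A ∈ F, (V ∩ A).Nonempty) : V ∈ F := by
  set G : Set (Set X) := {W | IsOpen W ∧ ∃ A ∈ F, A ∩ V ⊆ W} with hGdef
  have hFG : F ⊆ G := fun A hA => ⟨hF.1.isOpen_mem A hA, A, hA, inter_subset_left⟩
  have hG : IsOpenFilter G := by
    refine ⟨⟨V, hV, ?_⟩, fun W hW => hW.1, ?_, ?_, ?_⟩
    · obtain ⟨A, hA⟩ := hF.1.nonempty; exact ⟨A, hA, inter_subset_right⟩
    · rintro W ⟨hWo, A, hA, hAW⟩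
      obtain ⟨a, ha⟩ := h A hA
      exact ⟨a, hAW ⟨ha.2, ha.1⟩⟩
    · rintro W ⟨hWo, A, hA, hAW⟩ W' ⟨hW'o, A', hA', hAW'⟩
      exact ⟨hWo.inter hW'o, A ∩ A', hF.1.inter_mem A hA A' hA',
        fun a ha => ⟨hAW ⟨ha.1.1, ha.2⟩, hAW' ⟨ha.1.2, ha.2⟩⟩⟩
    · rintro W ⟨hWo, A, hA, hAW⟩ W' hW'o hWW'
      exact ⟨hW'o, A, hA, hAW.trans hWW'⟩
  have heq := hF.2 G hG hFG
  rw [← heq]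
  obtain ⟨A, hA⟩ := hF.1.nonempty
  exact ⟨hV, A, hA, inter_subset_right⟩

lemma adh_antitone {F G : Set (Set X)} (h : F ⊆ G) : adh G ⊆ adh F := by
  intro x hx
  simp only [adh, mem_iInter] at hx ⊢
  exact fun U hU => hx U (h hU)

lemma univ_mem_join (S : Set (Set X)) : univ ∈ openFilterJoin S :=
  ⟨isOpen_univ, ∅, by simp⟩

lemma inter_mem_join {S : Set (Set X)} {U V : Set X} (hU : U ∈ openFilterJoin S)
    (hV : V ∈ openFilterJoin S) : U ∩ V ∈ openFilterJoin S := by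
  classical
  obtain ⟨hUo, t, htS, htU⟩ := hU
  obtain ⟨hVo, s, hsS, hsV⟩ := hV
  refine ⟨hUo.inter hVo, t ∪ s, ?_, ?_⟩
  · rw [Finset.coe_union]; exact union_subset htS hsS
  · rw [Finset.coe_union, sInter_union]
    exact fun a ha => ⟨htU ha.1, hsV ha.2⟩

lemma superset_mem_join {S : Set (Set X)} {U V : Set X} (hU : U ∈ openFilterJoin S)
    (hV : IsOpen V) (hUV : U ⊆ V) : V ∈ openFilterJoin S := by
  obtain ⟨hUo, t, htS, htU⟩ := hU
  exact ⟨hV, t, htS, htU.trans hUV⟩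

lemma self_subset_join {S : Set (Set X)} (hS : ∀ U ∈ S, IsOpen U) :
    S ⊆ openFilterJoin S := by
  intro U hU
  exact ⟨hS U hU, {U}, by simpa using hU, by simp⟩

/-- The one-point extension topology on `Option X` determined by a filter of open sets. -/
def optTop (G : Set (Set X)) (huniv : univ ∈ G)
    (hinter : ∀ U ∈ G, ∀ V ∈ G, U ∩ V ∈ G)
    (hsup : ∀ U ∈ G, ∀ V : Set X, IsOpen V → U ⊆ V → V ∈ G)
    (hopen : ∀ U ∈ G, IsOpen U) : TopologicalSpace (Option X) where
  IsOpen O := IsOpen (some ⁻¹' O) ∧ (none ∈ O → some ⁻¹' O ∈ G)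
  isOpen_univ := ⟨by simpa using isOpen_univ, fun _ => by simpa using huniv⟩
  isOpen_inter O O' hO hO' := ⟨by rw [preimage_inter]; exact hO.1.inter hO'.1,
    fun h => by rw [preimage_inter]; exact hinter _ (hO.2 h.1) _ (hO'.2 h.2)⟩
  isOpen_sUnion s hs := by
    constructor
    · rw [preimage_sUnion]
      exact isOpen_biUnion fun t ht => (hs t ht).1
    · rintro ⟨t, ht, hnt⟩
      refine hsup _ ((hs t ht).2 hnt) _ ?_ ?_
      · rw [preimage_sUnion]; exact isOpen_biUnion fun t' ht' => (hs t' ht').1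
      · intro a ha; exact mem_sUnion.mpr ⟨t, ht, ha⟩

variable (G : Set (Set X)) (huniv : univ ∈ G)
    (hinter : ∀ U ∈ G, ∀ V ∈ G, U ∩ V ∈ G)
    (hsup : ∀ U ∈ G, ∀ V : Set X, IsOpen V → U ⊆ V → V ∈ G)
    (hopen : ∀ U ∈ G, IsOpen U)

lemma optTop_isOpen_iff (O : Set (Option X)) :
    IsOpen[optTop G huniv hinter hsup hopen] O ↔
      IsOpen (some ⁻¹' O) ∧ (none ∈ O → some ⁻¹' O ∈ G) := Iff.rfl

lemma optTop_isOpen_image {V : Set X} (hV : IsOpen V) :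
    IsOpen[optTop G huniv hinter hsup hopen] (some '' V) := by
  rw [optTop_isOpen_iff]
  refine ⟨?_, fun h => absurd h (by simp)⟩
  rw [preimage_image_eq _ (Option.some_injective X)]
  exact hV

lemma optTop_isOpen_insert {U : Set X} (hU : U ∈ G) :
    IsOpen[optTop G huniv hinter hsup hopen] (insert none (some '' U)) := by
  rw [optTop_isOpen_iff]
  have hpre : (some ⁻¹' (insert none (some '' U))) = U := by
    ext a; simp
  rw [hpre]
  exact ⟨hopen U hU, fun _ => hU⟩

lemma optTop_embedding :
    @IsEmbedding X (Option X) _ (optTop G huniv hinter hsup hopen) some := by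
  letI T := optTop G huniv hinter hsup hopen
  refine ⟨⟨TopologicalSpace.ext_iff.mpr fun U => ?_⟩, Option.some_injective X⟩
  rw [isOpen_induced_iff]
  constructor
  · intro hU
    refine ⟨some '' U, ?_, preimage_image_eq U (Option.some_injective X)⟩
    exact optTop_isOpen_image G huniv hinter hsup hopen hU
  · rintro ⟨O, hO, rfl⟩
    exact hO.1

end Aux

theorem stmt12 {X : Type u} [TopologicalSpace X] (n : ℕ) (hn : 2 ≤ n)
    (hX : NHausdorff X n) :
    NHClosed X n ↔
      ∀ F : Fin (n - 1) → Set (Set X), (∀ i, IsOpenFilter (F i)) →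
        (∀ t : Finset (Set X), ↑t ⊆ ⋃ i, F i → (⋂₀ (t : Set (Set X))).Nonempty) →
        (n - 1 : ℕ) ≤ (adh (openFilterJoin (⋃ i, F i))).encard := by
  classical
  obtain ⟨k, rfl⟩ : ∃ k, n = k + 2 := ⟨n - 2, by omega⟩
  constructor
  · -- n-H-closed → adherence condition
    rintro ⟨-, hclosed⟩ F hF hFIP
    by_contra hcard
    set S := ⋃ i, F i with hS
    set G := openFilterJoin S with hGdef
    have hGopen : ∀ U ∈ G, IsOpen U := fun U hU => hU.1
    have hGuniv : univ ∈ G := univ_mem_join S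
    have hGinter : ∀ U ∈ G, ∀ V ∈ G, U ∩ V ∈ G := fun U hU V hV => inter_mem_join hU hV
    have hGsup : ∀ U ∈ G, ∀ V : Set X, IsOpen V → U ⊆ V → V ∈ G :=
      fun U hU V hV h => superset_mem_join hU hV h
    have hGne : ∀ U ∈ G, U.Nonempty := by
      rintro U ⟨-, t, htS, hsub⟩
      exact (hFIP t htS).mono hsub
    letI T : TopologicalSpace (Option X) := optTop G hGuniv hGinter hGsup hGopen
    have hemb := optTop_embedding G hGuniv hGinter hGsup hGopen
    have hNH : NHausdorff (Option X) (k + 2) := by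
      intro x hx
      by_cases hnone : ∃ j, x j = none
      · -- one of the points is the extra point
        obtain ⟨j, hj⟩ := hnone
        have hxs : ∀ i : Fin (k + 1), x (j.succAbove i) ≠ none := by
          intro i h
          exact Fin.succAbove_ne j i (hx (h.trans hj.symm))
        set y : Fin (k + 1) → X := fun i =>
          (x (j.succAbove i)).get (Option.isSome_iff_ne_none.mpr (hxs i)) with hy
        have hxy : ∀ i, x (j.succAbove i) = some (y i) := fun i => (Option.some_get _).symm
        have hyinj : Function.Injective y := by
          intro a b h
          have hab : x (j.succAbove a) = x (j.succAbove b) := by rw [hxy, hxy, h]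
          exact Fin.succAbove_right_injective (hx hab)
        have hbad : ∃ i, y i ∉ adh G := by
          by_contra hall
          push_neg at hall
          apply hcard
          have h1 : range y ⊆ adh G := range_subset_iff.mpr hall
          have h2 : (range y).encard = ((k + 1 : ℕ) : ℕ∞) := by
            rw [← image_univ, Set.InjOn.encard_image hyinj.injOn, encard_univ]
            simp
          calc ((k + 2 - 1 : ℕ) : ℕ∞) = ((k + 1 : ℕ) : ℕ∞) := by norm_num
            _ = (range y).encard := h2.symm
            _ ≤ (adh G).encard := encard_le_encard h1
        obtain ⟨i₀, hi₀⟩ := hbad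
        simp only [adh, mem_iInter] at hi₀
        push_neg at hi₀
        obtain ⟨U, hUG, hyU⟩ := hi₀
        refine ⟨fun t => if t = j then insert none (some '' U)
          else if t = j.succAbove i₀ then some '' (closure U)ᶜ else range some, ?_, ?_⟩
        · intro t
          dsimp only
          by_cases h1 : t = j
          · subst h1
            rw [if_pos rfl]
            exact ⟨optTop_isOpen_insert G hGuniv hGinter hGsup hGopen hUG,
              by rw [hj]; exact mem_insert _ _⟩
          · rw [if_neg h1]
            by_cases h2 : t = j.succAbove i₀
            · subst h2
              rw [if_pos rfl]
              refine ⟨optTop_isOpen_image G hGuniv hGinter hGsup hGopen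
                isClosed_closure.isOpen_compl, ?_⟩
              rw [hxy i₀]
              exact mem_image_of_mem _ hyU
            · rw [if_neg h2]
              refine ⟨?_, ?_⟩
              · rw [← image_univ]
                exact optTop_isOpen_image G hGuniv hGinter hGsup hGopen isOpen_univ
              · have hne : x t ≠ none := fun h => h1 (hx (h.trans hj.symm))
                obtain ⟨a, ha⟩ := Option.ne_none_iff_exists.mp hne
                exact ⟨a, ha⟩
        · apply eq_empty_iff_forall_notMem.mpr
          intro o ho
          simp only [mem_iInter] at ho
          have h1 := ho j
          rw [if_pos rfl] at h1
          have h2 := ho (j.succAbove i₀)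
          rw [if_neg (Fin.succAbove_ne j i₀), if_pos rfl] at h2
          obtain ⟨a, haU, rfl⟩ := h2
          rcases mem_insert_iff.mp h1 with h1' | h1'
          · exact Option.some_ne_none a h1'
          · obtain ⟨b, hbU, hba⟩ := h1'
            rw [Option.some_inj] at hba
            exact haU (subset_closure (hba ▸ hbU))
      · -- all points are in `X`
        push_neg at hnone
        set y : Fin (k + 2) → X := fun i =>
          (x i).get (Option.isSome_iff_ne_none.mpr (hnone i)) with hy
        have hxy : ∀ i, x i = some (y i) := fun i => (Option.some_get _).symm
        have hyinj : Function.Injective y := by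
          intro a b h
          apply hx
          rw [hxy, hxy, h]
        obtain ⟨U, hU, hUempty⟩ := hX y hyinj
        refine ⟨fun i => some '' U i, ?_, ?_⟩
        · intro i
          dsimp only
          refine ⟨optTop_isOpen_image G hGuniv hGinter hGsup hGopen (hU i).1, ?_⟩
          rw [hxy i]
          exact mem_image_of_mem _ (hU i).2
        · apply eq_empty_iff_forall_notMem.mpr
          intro o ho
          simp only [mem_iInter] at ho
          obtain ⟨a, haU, rfl⟩ := ho 0
          have haall : a ∈ ⋂ i, U i := by
            rw [mem_iInter]
            intro i
            obtain ⟨b, hbU, hba⟩ := ho i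
            rw [Option.some_inj] at hba
            exact hba ▸ hbU
          rw [hUempty] at haall
          exact haall
    have hclosedrange := hclosed (Option X) T some hNH hemb
    have hco : (range (some : X → Option X))ᶜ = {none} := by
      ext o; cases o <;> simp
    have hopen : IsOpen[T] {none} := by
      rw [← hco]; exact hclosedrange.isOpen_compl
    rw [optTop_isOpen_iff] at hopen
    have hemp : (∅ : Set X) ∈ G := by
      have hpre : (some ⁻¹' ({none} : Set (Option X))) = (∅ : Set X) := by
        ext a; simp
      have := hopen.2 rfl
      rwa [hpre] at this
    obtain ⟨a, ha⟩ := hGne ∅ hemp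
    exact ha
  · -- adherence condition → n-H-closed
    intro hcond
    refine ⟨hX, ?_⟩
    intro Z tZ e hZH hemb
    by_contra hnc
    obtain ⟨z, hzc, hznotin⟩ : ∃ z ∈ closure (range e), z ∉ range e := by
      by_contra h
      push_neg at h
      exact hnc (isClosed_of_closure_subset h)
    set F₀ : Set (Set X) := {U | IsOpen U ∧ ∃ W, IsOpen W ∧ z ∈ W ∧ e ⁻¹' W ⊆ U} with hF₀
    have hF₀filter : IsOpenFilter F₀ := by
      refine ⟨⟨univ, isOpen_univ, univ, isOpen_univ, mem_univ z, subset_univ _⟩,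
        fun U hU => hU.1, ?_, ?_, ?_⟩
      · rintro U ⟨hUo, W, hWo, hzW, hWU⟩
        obtain ⟨w, hwW, a, rfl⟩ := mem_closure_iff.mp hzc W hWo hzW
        exact ⟨a, hWU hwW⟩
      · rintro U ⟨hUo, W, hWo, hzW, hWU⟩ V ⟨hVo, W', hW'o, hzW', hW'V⟩
        exact ⟨hUo.inter hVo, W ∩ W', hWo.inter hW'o, ⟨hzW, hzW'⟩,
          fun a ha => ⟨hWU ha.1, hW'V ha.2⟩⟩
      · rintro U ⟨hUo, W, hWo, hzW, hWU⟩ V hVo hUV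
        exact ⟨hVo, W, hWo, hzW, hWU.trans hUV⟩
    obtain ⟨U, hUultra, hF₀U⟩ := exists_openUltrafilter hF₀filter
    haveI : Nonempty (Fin (k + 2 - 1)) := ⟨⟨0, by omega⟩⟩
    have hUnion : (⋃ _i : Fin (k + 2 - 1), U) = U := iUnion_const U
    have hFIP : ∀ t : Finset (Set X), ↑t ⊆ ⋃ _i : Fin (k + 2 - 1), U →
        (⋂₀ (t : Set (Set X))).Nonempty := by
      intro t ht
      rw [hUnion] at ht
      exact hUultra.1.nonempty_mem _ (hUultra.1.sInter_finset_mem t ht)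
    have hkey := hcond (fun _ => U) (fun _ => hUultra.1) hFIP
    have hsub : adh (openFilterJoin (⋃ _i : Fin (k + 2 - 1), U)) ⊆ adh U := by
      apply adh_antitone
      rw [hUnion]
      exact self_subset_join hUultra.1.isOpen_mem
    have hkey' : ((k + 1 : ℕ) : ℕ∞) ≤
        (adh (openFilterJoin (⋃ _i : Fin (k + 2 - 1), U))).encard := by
      calc ((k + 1 : ℕ) : ℕ∞) = ((k + 2 - 1 : ℕ) : ℕ∞) := by norm_num
        _ ≤ _ := hkey
    obtain ⟨s, hsA, hscard⟩ := Set.exists_subset_encard_eq hkey'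
    have hsfin : s.Finite := finite_of_encard_eq_coe hscard
    have hcard' : hsfin.toFinset.card = k + 1 := by
      have := hsfin.encard_eq_coe_toFinset_card
      rw [hscard] at this
      exact_mod_cast this.symm
    set eqv := Finset.equivFinOfCardEq hcard' with heqv
    set f : Fin (k + 1) → X := fun i => (eqv.symm i : X) with hf
    have hfinj : Function.Injective f := by
      intro a b h
      exact eqv.symm.injective (Subtype.ext h)
    have hfadh : ∀ i, f i ∈ adh U := by
      intro i
      have h1 : (eqv.symm i : X) ∈ s := hsfin.mem_toFinset.mp (eqv.symm i).2
      exact hsub (hsA h1)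
    set x : Fin (k + 2) → Z := Fin.cons z (fun i => e (f i)) with hxdef
    have hxinj : Function.Injective x := by
      rw [hxdef, Fin.cons_injective_iff]
      refine ⟨?_, hemb.injective.comp hfinj⟩
      rintro ⟨i, hi⟩
      exact hznotin ⟨f i, hi⟩
    obtain ⟨W, hW, hWempty⟩ := hZH x hxinj
    have hall : ∀ t : Fin (k + 2), e ⁻¹' (W t) ∈ U := by
      intro t
      induction t using Fin.cases with
      | zero =>
          apply hF₀U
          refine ⟨(hW 0).1.preimage hemb.continuous, W 0, (hW 0).1, ?_, subset_rfl⟩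
          have h0 := (hW 0).2
          rwa [hxdef, Fin.cons_zero] at h0
      | succ i =>
          apply hUultra.mem_of_inter_nonempty ((hW i.succ).1.preimage hemb.continuous)
          intro A hA
          have hfi : f i ∈ closure A := by
            have hadh := hfadh i
            simp only [adh, mem_iInter] at hadh
            exact hadh A hA
          have hmem : f i ∈ e ⁻¹' (W i.succ) := by
            have hs := (hW i.succ).2
            rw [hxdef, Fin.cons_succ] at hs
            exact hs
          exact mem_closure_iff.mp hfi _ ((hW i.succ).1.preimage hemb.continuous) hmem
    have hInt : (⋂ t, e ⁻¹' (W t)) ∈ U := by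
      have h1 : ((Finset.univ.image fun t : Fin (k + 2) => e ⁻¹' (W t)) : Set (Set X)) ⊆ U := by
        intro V hV
        simp only [Finset.coe_image, Finset.coe_univ, image_univ, mem_range] at hV
        obtain ⟨t, rfl⟩ := hV
        exact hall t
      have h2 := hUultra.1.sInter_finset_mem _ h1
      have h3 : ⋂₀ ((Finset.univ.image fun t : Fin (k + 2) => e ⁻¹' (W t)) : Set (Set X))
          = ⋂ t, e ⁻¹' (W t) := by
        rw [Finset.coe_image, Finset.coe_univ, image_univ, sInter_range]
      rwa [h3] at h2
    obtain ⟨a, ha⟩ := hUultra.1.nonempty_mem _ hInt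
    rw [mem_iInter] at ha
    have hfin : e a ∈ ⋂ t, W t := mem_iInter.mpr fun t => ha t
    rw [hWempty] at hfin
    exact hfin
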